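/- Let (X, μ) be a probability space and {h_t : t ∈ ℕ} a sequence of nonnegative measurable functions with ∫ h_t dμ ≤ 1 for all t, satisfying the Sprindžuk condition: there is C > 0 such that for all N > M ≥ 1, ∫_X (∑_{t=M}^N h_t(x) − ∑_{t=M}^N ∫h_t dμ)² dμ(x) ≤ C · ∑_{t=M}^N ∫h_t dμ. If ∑_{t=1}^∞ ∫ h_t dμ = ∞, then for μ-almost every x, (∑_{t=1}^N h_t(x)) / (∑_{t=1}^N ∫ h_t dμ) → 1 as N → ∞. -/

import Mathlib

open MeasureTheory Filter

private lemma sqz (Φ S : ℕ → ℝ) (n : ℕ → ℕ)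
    (hΦmono : Monotone Φ) (hΦnn : ∀ N, 0 ≤ Φ N)
    (hSmono : Monotone S) (hS0 : ∀ N, 0 ≤ S N)
    (hΦtop : Tendsto Φ atTop atTop)
    (hn : ∀ k : ℕ, ((k : ℝ)) ^ 2 ≤ Φ (n k))
    (hnub : ∀ k : ℕ, Φ (n k) ≤ ((k : ℝ)) ^ 2 + 1)
    (hnle : ∀ k N : ℕ, ((k : ℝ)) ^ 2 ≤ Φ N → n k ≤ N)
    (hdev : ∀ m : ℕ, ∀ᶠ k in atTop,
      |S (n (k + 2)) - Φ (n (k + 2))| < (1 / (m + 1 : ℝ)) * Φ (n (k + 2))) :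
    Tendsto (fun N => S N / Φ N) atTop (nhds 1) := by
  rw [Metric.tendsto_atTop]
  intro ε hε
  obtain ⟨m, hm⟩ := exists_nat_one_div_lt (half_pos hε)
  set δ : ℝ := 1 / (m + 1 : ℝ) with hδdef
  have hδpos : 0 < δ := by positivity
  have hδ1 : δ ≤ 1 := by
    rw [hδdef, div_le_one (by positivity)]
    have : (0:ℝ) ≤ (m:ℝ) := Nat.cast_nonneg m
    linarith
  obtain ⟨K₁, hK₁⟩ := eventually_atTop.1 (hdev m)
  have hdev' : ∀ j : ℕ, K₁ + 2 ≤ j → |S (n j) - Φ (n j)| < δ * Φ (n j) := by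
    intro j hj
    obtain ⟨k, rfl⟩ : ∃ k, j = k + 2 := ⟨j - 2, by omega⟩
    exact hK₁ k (by omega)
  set K₂ : ℕ := ⌈36 / ε⌉₊ + 2 with hK₂def
  have hK₂pos : (0:ℝ) < (K₂:ℝ) := by positivity
  have hK₂lt : 36 / ε < (K₂:ℝ) := by
    have h1 := Nat.le_ceil (36 / ε)
    have h2 : ((⌈36 / ε⌉₊ : ℕ) : ℝ) < (K₂ : ℝ) := by exact_mod_cast Nat.lt_add_of_pos_right (by norm_num)
    linarith
  have hK₂ : 18 / (K₂:ℝ) < ε / 2 := by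
    rw [div_lt_div_iff₀ hK₂pos (by norm_num : (0:ℝ) < 2)]
    have := (div_lt_iff₀ hε).1 hK₂lt
    nlinarith
  set K : ℕ := max (K₁ + 2) (max K₂ 2) with hKdef
  obtain ⟨N₀, hN₀⟩ := eventually_atTop.1 (hΦtop.eventually_ge_atTop (((K : ℝ)) ^ 2))
  refine ⟨N₀, fun N hN => ?_⟩
  have hΦKN : ((K : ℝ)) ^ 2 ≤ Φ N := hN₀ N hN
  have hΦNnn := hΦnn N
  set k : ℕ := Nat.sqrt ⌊Φ N⌋₊ with hkdef
  have hkK : K ≤ k := by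
    rw [hkdef, Nat.le_sqrt]
    refine Nat.le_floor ?_
    push_cast
    nlinarith [hΦKN]
  have hk2 : 2 ≤ k := le_trans (le_trans (le_max_right _ _) (le_max_right _ _)) hkK
  have hk2r : (2:ℝ) ≤ (k:ℝ) := by exact_mod_cast hk2
  have hkpos : (0:ℝ) < (k:ℝ) := by linarith
  have hflole : ((k : ℝ)) ^ 2 ≤ Φ N := by
    have h1 : (k * k : ℕ) ≤ ⌊Φ N⌋₊ := by rw [hkdef]; exact Nat.sqrt_le _
    have h2 : ((⌊Φ N⌋₊ : ℕ) : ℝ) ≤ Φ N := Nat.floor_le hΦNnn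
    have h3 : ((k * k : ℕ) : ℝ) ≤ ((⌊Φ N⌋₊ : ℕ) : ℝ) := by exact_mod_cast h1
    push_cast at h3
    nlinarith
  have hΦub : Φ N < ((k : ℝ) + 1) ^ 2 := by
    have h1 : Φ N < (⌊Φ N⌋₊ : ℝ) + 1 := Nat.lt_floor_add_one _
    have h2 : ⌊Φ N⌋₊ < (k + 1) * (k + 1) := by rw [hkdef]; exact Nat.lt_succ_sqrt _
    have h3 : (⌊Φ N⌋₊ : ℕ) + 1 ≤ (k + 1) * (k + 1) := h2
    have h4 : ((⌊Φ N⌋₊ : ℕ) : ℝ) + 1 ≤ ((k:ℝ) + 1) * ((k:ℝ) + 1) := by exact_mod_cast h3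
    nlinarith
  have hΦpos : 0 < Φ N := lt_of_lt_of_le (by positivity) hflole
  have hnkN : n k ≤ N := hnle k N hflole
  have hNle : N ≤ n (k + 2) := by
    by_contra hcon
    push_neg at hcon
    have h5 := hΦmono hcon.le
    have h4 := hn (k + 2)
    push_cast at h4
    nlinarith
  have hdevk := hdev' k (le_trans (le_trans (le_max_left _ _) le_rfl) hkK)
  have hdevk2 := hdev' (k + 2) (by have := le_trans (le_max_left _ _) hkK; omega)
  -- lower bound on S N
  have hSlow : (1 - δ) * ((k:ℝ)) ^ 2 ≤ S N := by
    have h5 := hSmono hnkN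
    have h6 := (abs_lt.1 hdevk).1
    have h7 := hn k
    have h9 : (1 - δ) * ((k:ℝ)) ^ 2 ≤ (1 - δ) * Φ (n k) :=
      mul_le_mul_of_nonneg_left h7 (by linarith)
    linarith
  -- upper bound on S N
  have hShigh : S N ≤ (1 + δ) * (((k:ℝ) + 2) ^ 2 + 1) := by
    have h5 := hSmono hNle
    have h6 := (abs_lt.1 hdevk2).2
    have h7 := hnub (k + 2)
    push_cast at h7
    have h9 : (1 + δ) * Φ (n (k + 2)) ≤ (1 + δ) * (((k:ℝ) + 2) ^ 2 + 1) :=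
      mul_le_mul_of_nonneg_left h7 (by linarith)
    linarith
  set kr : ℝ := (k : ℝ) with hkrdef
  have hkrne : kr ≠ 0 := ne_of_gt hkpos
  have hub : S N / Φ N ≤ 1 + δ + 18 / kr := by
    rw [div_le_iff₀ hΦpos]
    have e1 : (1 + δ) * ((kr + 2) ^ 2 + 1) ≤ (1 + δ + 18 / kr) * kr ^ 2 := by
      have h11 : (1 + δ + 18 / kr) * kr ^ 2 = kr ^ 2 + δ * kr ^ 2 + 18 * kr := by
        field_simp
      rw [h11]
      have hp : (0:ℝ) ≤ (1 - δ) * kr := mul_nonneg (by linarith) (by linarith)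
      linarith [hp, hk2r, hδ1, hδpos.le]
    have e2 : (1 + δ + 18 / kr) * kr ^ 2 ≤ (1 + δ + 18 / kr) * Φ N :=
      mul_le_mul_of_nonneg_left hflole (by positivity)
    linarith
  have hlb : 1 - δ - 9 / kr ≤ S N / Φ N := by
    rcases le_or_gt (1 - δ - 9 / kr) 0 with hL | hL
    · exact le_trans hL (div_nonneg (hS0 N) hΦpos.le)
    · rw [le_div_iff₀ hΦpos]
      have hy : (0:ℝ) ≤ 9 / kr := by positivity
      have e1 : (1 - δ - 9 / kr) * Φ N ≤ (1 - δ - 9 / kr) * (kr + 1) ^ 2 :=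
        mul_le_mul_of_nonneg_left hΦub.le hL.le
      have e2 : (1 - δ - 9 / kr) * (kr + 1) ^ 2 ≤ (1 - δ) * kr ^ 2 := by
        have h13 : (1 - δ - 9 / kr) * (kr + 1) ^ 2
            = (1 - δ) * (kr + 1) ^ 2 - (9 * kr + 18 + 9 / kr) := by
          field_simp
          ring
        rw [h13]
        have hp : (0:ℝ) ≤ δ * kr := mul_nonneg hδpos.le hkpos.le
        linarith [hy, hp, hk2r, hδ1]
      linarith [hSlow]
  have h18 : 18 / kr ≤ 18 / (K₂ : ℝ) := by
    apply div_le_div_of_nonneg_left (by norm_num) hK₂pos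
    rw [hkrdef]
    exact_mod_cast le_trans (le_trans (le_max_left _ _) (le_max_right _ _)) hkK
  have h918 : 9 / kr ≤ 18 / kr := (div_le_div_iff_of_pos_right hkpos).2 (by norm_num)
  rw [Real.dist_eq, abs_sub_lt_iff]
  constructor
  · linarith
  · linarith


/-- Sprindžuk's lemma (Chapter I, Lemma 10). -/
theorem stmt_2 {X : Type*} [MeasurableSpace X] (μ : Measure X) [IsProbabilityMeasure μ]
    (h : ℕ → X → ℝ) (hL2 : ∀ t, MemLp (h t) 2 μ) (hnn : ∀ t x, 0 ≤ h t x)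
    (hbd : ∀ t, ∫ x, h t x ∂μ ≤ 1)
    (C : ℝ) (hC : 0 < C)
    (hSP : ∀ M N : ℕ, 1 ≤ M → M < N →
      ∫ x, ((∑ t ∈ Finset.Icc M N, h t x) - ∑ t ∈ Finset.Icc M N, ∫ y, h t y ∂μ) ^ 2 ∂μ
        ≤ C * ∑ t ∈ Finset.Icc M N, ∫ y, h t y ∂μ)
    (hdiv : ¬ Summable (fun t => ∫ y, h t y ∂μ)) :
    ∀ᵐ x ∂μ, Tendsto (fun N => (∑ t ∈ Finset.Icc 1 N, h t x) /
        (∑ t ∈ Finset.Icc 1 N, ∫ y, h t y ∂μ)) atTop (nhds 1) := by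
  classical
  set Φ : ℕ → ℝ := fun N => ∑ t ∈ Finset.Icc 1 N, ∫ y, h t y ∂μ with hΦdef
  have hΦeq : ∀ N, Φ N = ∑ t ∈ Finset.Icc 1 N, ∫ y, h t y ∂μ := fun N => by rw [hΦdef]
  have hΦnn : ∀ N, 0 ≤ Φ N := fun N =>
    Finset.sum_nonneg fun i _ => integral_nonneg (hnn i)
  have hΦmono : Monotone Φ := fun a b hab =>
    Finset.sum_le_sum_of_subset_of_nonneg (Finset.Icc_subset_Icc_right hab)
      (fun i _ _ => integral_nonneg (hnn i))
  have hΦleN : ∀ N : ℕ, Φ N ≤ (N : ℝ) := by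
    intro N
    calc Φ N ≤ ∑ t ∈ Finset.Icc 1 N, (1:ℝ) := Finset.sum_le_sum fun i _ => hbd i
      _ = ((Finset.Icc 1 N).card : ℝ) := by simp
      _ = (N : ℝ) := by simp [Nat.card_Icc]
  have hrel : ∀ N : ℕ, Φ N
      = (∑ i ∈ Finset.range (N + 1), ∫ y, h i y ∂μ) - ∫ y, h 0 y ∂μ := by
    intro N
    rw [hΦeq]
    induction N with
    | zero => simp
    | succ n ih =>
      rw [Finset.sum_Icc_succ_top (by omega : 1 ≤ n + 1), ih,
        Finset.sum_range_succ (fun i => ∫ y, h i y ∂μ) (n + 1)]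
      ring
  have hsum : Tendsto (fun n => ∑ i ∈ Finset.range n, ∫ y, h i y ∂μ) atTop atTop :=
    (not_summable_iff_tendsto_nat_atTop_of_nonneg
      (fun t => integral_nonneg (hnn t))).1 hdiv
  have hΦtop : Tendsto Φ atTop atTop := by
    have h2 := tendsto_atTop_add_const_right atTop (-(∫ y, h 0 y ∂μ))
      (hsum.comp (tendsto_add_atTop_nat 1))
    refine h2.congr fun N => ?_
    rw [hrel N]
    simp [Function.comp, sub_eq_add_neg]
  have hex : ∀ k : ℕ, ∃ N, ((k : ℝ)) ^ 2 ≤ Φ N :=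
    fun k => (hΦtop.eventually_ge_atTop _).exists
  set n : ℕ → ℕ := fun k => Nat.find (hex k) with hndef
  have hn : ∀ k : ℕ, ((k : ℝ)) ^ 2 ≤ Φ (n k) := fun k => Nat.find_spec (hex k)
  have hnle : ∀ k N : ℕ, ((k : ℝ)) ^ 2 ≤ Φ N → n k ≤ N :=
    fun k N hN => Nat.find_min' (hex k) hN
  have hnub : ∀ k : ℕ, Φ (n k) ≤ ((k : ℝ)) ^ 2 + 1 := by
    intro k
    rcases Nat.eq_zero_or_pos (n k) with h0 | hpos
    · rw [h0, hΦeq, Finset.Icc_eq_empty (by omega)]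
      simp
      positivity
    · obtain ⟨a, ha⟩ : ∃ a, n k = a + 1 := ⟨n k - 1, by omega⟩
      have hlt : Φ a < ((k : ℝ)) ^ 2 := by
        have := Nat.find_min (hex k) (show a < n k by omega)
        exact lt_of_not_ge this
      have hstep : Φ (a + 1) = Φ a + ∫ y, h (a + 1) y ∂μ := by
        rw [hΦeq, hΦeq, Finset.sum_Icc_succ_top (by omega : 1 ≤ a + 1)]
      rw [ha, hstep]
      have := hbd (a + 1)
      linarith
  have hnlarge : ∀ j : ℕ, 2 ≤ j → 1 < n j := by
    intro j hj
    have h1 : ((j : ℝ)) ^ 2 ≤ ((n j : ℕ) : ℝ) := le_trans (hn j) (hΦleN (n j))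
    have h2 : (2:ℝ) ≤ (j : ℝ) := by exact_mod_cast hj
    have h3 : (1:ℝ) < ((n j : ℕ) : ℝ) := by nlinarith
    exact_mod_cast h3
  have hvar : ∀ j : ℕ, 1 < n j →
      ∫ x, ((∑ t ∈ Finset.Icc 1 (n j), h t x) - Φ (n j)) ^ 2 ∂μ ≤ C * Φ (n j) := by
    intro j hj
    have := hSP 1 (n j) le_rfl hj
    rw [hΦeq]
    exact this
  -- Chebyshev bound
  have hcheb : ∀ m k : ℕ,
      μ {x | (1 / (m + 1 : ℝ)) * Φ (n (k + 2)) ≤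
          |(∑ t ∈ Finset.Icc 1 (n (k + 2)), h t x) - Φ (n (k + 2))|}
        ≤ ENNReal.ofReal (C * ((m : ℝ) + 1) ^ 2 / ((k : ℝ) + 1) ^ 2) := by
    intro m k
    set j : ℕ := k + 2 with hjdef
    set P : ℝ := Φ (n j) with hPdef
    set δ : ℝ := 1 / (m + 1 : ℝ) with hδdef
    have hδpos : 0 < δ := by positivity
    have hPlb : ((k : ℝ) + 2) ^ 2 ≤ P := by
      have := hn j
      rw [hjdef] at this
      push_cast at this
      linarith
    have hknn : (0:ℝ) ≤ (k : ℝ) := Nat.cast_nonneg k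
    have hPpos : 0 < P := lt_of_lt_of_le (by positivity) hPlb
    have hnj1 : 1 < n j := hnlarge j (by omega)
    have hS2 : MemLp (fun x => ∑ t ∈ Finset.Icc 1 (n j), h t x) 2 μ :=
      memLp_finset_sum _ (fun i _ => hL2 i)
    have hint : Integrable (fun x => ((∑ t ∈ Finset.Icc 1 (n j), h t x) - P) ^ 2) μ := by
      have := (hS2.sub (memLp_const P)).integrable_sq
      refine this.congr (ae_of_all μ fun x => ?_)
      simp [Pi.sub_apply]
    have hmark := mul_meas_ge_le_integral_of_nonneg
      (ae_of_all μ (fun x => sq_nonneg ((∑ t ∈ Finset.Icc 1 (n j), h t x) - P)))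
      hint ((δ * P) ^ 2)
    have hvar' := hvar j hnj1
    have hsub : {x | δ * P ≤ |(∑ t ∈ Finset.Icc 1 (n j), h t x) - P|} ⊆
        {x | (δ * P) ^ 2 ≤ ((∑ t ∈ Finset.Icc 1 (n j), h t x) - P) ^ 2} := by
      intro x hx
      simp only [Set.mem_setOf_eq] at hx ⊢
      calc (δ * P) ^ 2 ≤ |(∑ t ∈ Finset.Icc 1 (n j), h t x) - P| ^ 2 :=
            pow_le_pow_left₀ (by positivity) hx 2
        _ = ((∑ t ∈ Finset.Icc 1 (n j), h t x) - P) ^ 2 := sq_abs _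
    have hεpos : 0 < (δ * P) ^ 2 := by positivity
    have htoReal : (μ {x | δ * P ≤
        |(∑ t ∈ Finset.Icc 1 (n j), h t x) - P|}).toReal
          ≤ C * ((m : ℝ) + 1) ^ 2 / ((k : ℝ) + 1) ^ 2 := by
      have h1 := ENNReal.toReal_mono (measure_ne_top μ _) (measure_mono hsub)
      have h2 : (μ {x | (δ * P) ^ 2 ≤
          ((∑ t ∈ Finset.Icc 1 (n j), h t x) - P) ^ 2}).toReal ≤ C * P / (δ * P) ^ 2 := by
        rw [le_div_iff₀ hεpos]
        calc _ = (δ * P) ^ 2 * (μ {x | (δ * P) ^ 2 ≤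
              ((∑ t ∈ Finset.Icc 1 (n j), h t x) - P) ^ 2}).toReal := by ring
          _ ≤ ∫ x, ((∑ t ∈ Finset.Icc 1 (n j), h t x) - P) ^ 2 ∂μ := hmark
          _ ≤ C * P := hvar'
      have h3 : C * P / (δ * P) ^ 2 = C * ((m : ℝ) + 1) ^ 2 / P := by
        rw [hδdef]
        field_simp
      have h4 : C * ((m : ℝ) + 1) ^ 2 / P ≤ C * ((m : ℝ) + 1) ^ 2 / ((k : ℝ) + 1) ^ 2 := by
        apply div_le_div_of_nonneg_left (by positivity) (by positivity)
        nlinarith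
      linarith
    calc μ _ = ENNReal.ofReal (μ {x | δ * P ≤
          |(∑ t ∈ Finset.Icc 1 (n j), h t x) - P|}).toReal :=
        (ENNReal.ofReal_toReal (measure_ne_top μ _)).symm
      _ ≤ _ := ENNReal.ofReal_le_ofReal htoReal
  -- summability
  have hsummable : ∀ m : ℕ,
      (∑' k : ℕ, ENNReal.ofReal (C * ((m : ℝ) + 1) ^ 2 / ((k : ℝ) + 1) ^ 2)) ≠ ⊤ := by
    intro m
    have h2 : Summable (fun k : ℕ => 1 / ((k : ℝ) + 1) ^ 2) := by
      have h0 : Summable (fun n : ℕ => 1 / (n : ℝ) ^ 2) :=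
        Real.summable_one_div_nat_pow.2 one_lt_two
      have h1 := (summable_nat_add_iff 1).2 h0
      refine h1.congr fun k => ?_
      push_cast
      ring
    have h1 : Summable (fun k : ℕ => C * ((m : ℝ) + 1) ^ 2 / ((k : ℝ) + 1) ^ 2) := by
      have := h2.mul_left (C * ((m : ℝ) + 1) ^ 2)
      refine this.congr fun k => ?_
      rw [mul_one_div]
    rw [← ENNReal.ofReal_tsum_of_nonneg (fun k => by positivity) h1]
    exact ENNReal.ofReal_ne_top
  -- Borel--Cantelli
  have hBC : ∀ᵐ x ∂μ, ∀ m : ℕ, ∀ᶠ k in atTop,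
      |(∑ t ∈ Finset.Icc 1 (n (k + 2)), h t x) - Φ (n (k + 2))|
        < (1 / (m + 1 : ℝ)) * Φ (n (k + 2)) := by
    rw [ae_all_iff]
    intro m
    have h0 := MeasureTheory.ae_eventually_notMem (μ := μ)
      (s := fun k => {x | (1 / (m + 1 : ℝ)) * Φ (n (k + 2)) ≤
        |(∑ t ∈ Finset.Icc 1 (n (k + 2)), h t x) - Φ (n (k + 2))|})
      (ne_top_of_le_ne_top (hsummable m) (ENNReal.tsum_le_tsum (fun k => hcheb m k)))
    filter_upwards [h0] with x hx
    exact hx.mono fun k hk => not_le.1 hk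
  filter_upwards [hBC] with x hx
  have hSmono : Monotone (fun N => ∑ t ∈ Finset.Icc 1 N, h t x) := fun a b hab =>
    Finset.sum_le_sum_of_subset_of_nonneg (Finset.Icc_subset_Icc_right hab)
      (fun i _ _ => hnn i x)
  have hS0 : ∀ N, 0 ≤ ∑ t ∈ Finset.Icc 1 N, h t x := fun N =>
    Finset.sum_nonneg fun i _ => hnn i x
  have H := sqz Φ (fun N => ∑ t ∈ Finset.Icc 1 N, h t x) n hΦmono hΦnn hSmono hS0
    hΦtop hn hnub hnle hx
  simpa [hΦdef] using H
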